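/- Let X be a normed space and (yₙ) a sequence in X such that infₙ ‖yₙ‖ > 0 and yₙ → 0 weakly. Then (yₙ) contains a subsequence that is an essential basic sequence. -/

import Mathlib

open Filter Topology

variable (𝕜 : Type*) [RCLike 𝕜]
variable {X : Type*} [NormedAddCommGroup X] [NormedSpace 𝕜 X]

/-- The `n`-th partial sum `∑_{i<n} aᵢ • xᵢ` of the expansion with coefficients `a`. -/
noncomputable def partialSum (x : ℕ → X) (a : ℕ → 𝕜) (n : ℕ) : X :=
  ∑ i ∈ Finset.range n, a i • x i

/-- `v` has the expansion `v = ∑ᵢ aᵢ xᵢ` (ordered convergence of partial sums). -/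
def Expands (x : ℕ → X) (a : ℕ → 𝕜) (v : X) : Prop :=
  Filter.Tendsto (partialSum 𝕜 x a) Filter.atTop (nhds v)

/-- `(xₙ)` is a Schauder basis of `X`: every vector has a unique expansion. -/
def IsSchauderBasis (x : ℕ → X) : Prop :=
  ∀ v : X, ∃! a : ℕ → 𝕜, Expands 𝕜 x a v

/-- `(xₙ)` is an essential Schauder basis of `X`: a Schauder basis for which the canonical
map `T : L_X → X` is an isomorphism; equivalently (since `‖T‖ ≤ 1` always holds), there is
`C > 0` bounding `η(a) = supₙ ‖∑_{i<n} aᵢxᵢ‖ ≤ C‖v‖` for every expansion `v = ∑ aᵢxᵢ`,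
i.e. `‖T⁻¹‖ ≤ C`. -/
def IsEssentialBasis (x : ℕ → X) : Prop :=
  IsSchauderBasis 𝕜 x ∧
    ∃ C > 0, ∀ (a : ℕ → 𝕜) (v : X), Expands 𝕜 x a v →
      ∀ n, ‖partialSum 𝕜 x a n‖ ≤ C * ‖v‖

/-- `(xₙ)` is an essential basic sequence: an essential Schauder basis of the closure of
its linear span. -/
def IsEssentialBasicSeq (x : ℕ → X) : Prop :=
  (∀ v ∈ closure (Submodule.span 𝕜 (Set.range x) : Set X),
      ∃! a : ℕ → 𝕜, Expands 𝕜 x a v) ∧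
    ∃ C > 0, ∀ (a : ℕ → 𝕜) (v : X), Expands 𝕜 x a v →
      ∀ n, ‖partialSum 𝕜 x a n‖ ≤ C * ‖v‖

/-- The Grunblum condition with constant `M`. -/
def Grunblum (x : ℕ → X) (M : ℝ) : Prop :=
  ∀ (a : ℕ → 𝕜) (m n : ℕ), m ≤ n →
    ‖partialSum 𝕜 x a m‖ ≤ M * ‖partialSum 𝕜 x a n‖

variable {𝕜}

lemma partialSum_sub (x : ℕ → X) (a b : ℕ → 𝕜) (n : ℕ) :
    partialSum 𝕜 x (a - b) n = partialSum 𝕜 x a n - partialSum 𝕜 x b n := by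
  simp [partialSum, sub_smul, Finset.sum_sub_distrib]

lemma expands_sub {x : ℕ → X} {a b : ℕ → 𝕜} {v w : X}
    (ha : Expands 𝕜 x a v) (hb : Expands 𝕜 x b w) : Expands 𝕜 x (a - b) (v - w) := by
  have h := ha.sub hb
  unfold Expands
  have he : partialSum 𝕜 x (a - b) = fun n => partialSum 𝕜 x a n - partialSum 𝕜 x b n :=
    funext fun n => partialSum_sub x a b n
  rw [he]
  exact h

lemma Grunblum.norm_le {x : ℕ → X} {M : ℝ} (hG : Grunblum 𝕜 x M)
    {a : ℕ → 𝕜} {v : X} (h : Expands 𝕜 x a v) (n : ℕ) :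
    ‖partialSum 𝕜 x a n‖ ≤ M * ‖v‖ := by
  have ht : Tendsto (fun k => M * ‖partialSum 𝕜 x a k‖) atTop (nhds (M * ‖v‖)) :=
    (h.norm).const_mul M
  refine ge_of_tendsto ht ?_
  filter_upwards [eventually_ge_atTop n] with k hk
  exact hG a n k hk

lemma Grunblum.coeff_bound {x : ℕ → X} {M c : ℝ} (hG : Grunblum 𝕜 x M) (hc : 0 < c)
    (hx : ∀ n, c ≤ ‖x n‖) {a : ℕ → 𝕜} {v : X} (h : Expands 𝕜 x a v) (i : ℕ) :
    ‖a i‖ ≤ 2 * M / c * ‖v‖ := by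
  have h1 : a i • x i = partialSum 𝕜 x a (i + 1) - partialSum 𝕜 x a i := by
    simp [partialSum, Finset.sum_range_succ]
  have h2 : ‖a i‖ * c ≤ 2 * M * ‖v‖ := by
    calc ‖a i‖ * c ≤ ‖a i‖ * ‖x i‖ := by
          exact mul_le_mul_of_nonneg_left (hx i) (norm_nonneg _)
      _ = ‖a i • x i‖ := (norm_smul _ _).symm
      _ ≤ ‖partialSum 𝕜 x a (i + 1)‖ + ‖partialSum 𝕜 x a i‖ := by
          rw [h1]; exact norm_sub_le _ _
      _ ≤ M * ‖v‖ + M * ‖v‖ := add_le_add (hG.norm_le h _) (hG.norm_le h _)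
      _ = 2 * M * ‖v‖ := by ring
  rw [div_mul_eq_mul_div, le_div_iff₀ hc]
  linarith [h2]

lemma Grunblum.unique {x : ℕ → X} {M c : ℝ} (hG : Grunblum 𝕜 x M) (hc : 0 < c)
    (hx : ∀ n, c ≤ ‖x n‖) {a b : ℕ → 𝕜} {v : X}
    (ha : Expands 𝕜 x a v) (hb : Expands 𝕜 x b v) : a = b := by
  have h0 : Expands 𝕜 x (a - b) (v - v) := expands_sub ha hb
  rw [sub_self] at h0
  funext i
  have := hG.coeff_bound hc hx h0 i
  simp only [norm_zero, mul_zero] at this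
  have : ‖(a - b) i‖ = 0 := le_antisymm this (norm_nonneg _)
  have : a i - b i = 0 := by simpa [norm_eq_zero] using this
  exact sub_eq_zero.mp this


lemma span_expands (x : ℕ → X) {v : X} (hv : v ∈ Submodule.span 𝕜 (Set.range x)) :
    ∃ (a : ℕ → 𝕜) (N : ℕ), ∀ n, N ≤ n → partialSum 𝕜 x a n = v := by
  obtain ⟨f, hf⟩ := Finsupp.mem_span_range_iff_exists_finsupp.mp hv
  classical
  rcases f.support.eq_empty_or_nonempty with h | h
  · refine ⟨0, 0, fun n _ => ?_⟩
    have : f = 0 := Finsupp.support_eq_empty.mp h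
    rw [this] at hf
    simp only [Finsupp.sum_zero_index] at hf
    simp [partialSum, ← hf]
  · refine ⟨f, f.support.max' h + 1, fun n hn => ?_⟩
    rw [← hf, Finsupp.sum, partialSum]
    refine (Finset.sum_subset ?_ ?_).symm
    · intro i hi
      exact Finset.mem_range.mpr (lt_of_le_of_lt (Finset.le_max' _ _ hi) hn)
    · intro i _ hi
      simp [Finsupp.notMem_support_iff.mp hi]

lemma mazur_step (y : ℕ → X) (c : ℝ) (hc : 0 < c) (hinf : ∀ n, c ≤ ‖y n‖)
    (hweak : ∀ f : X →L[𝕜] 𝕜, Filter.Tendsto (fun n => f (y n)) Filter.atTop (nhds (0 : 𝕜)))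
    (s : Finset ℕ) (ε : ℝ) (hε : 0 < ε) (hε1 : ε < 1) :
    ∃ n : ℕ, (∀ m ∈ s, m < n) ∧ ∀ e ∈ Submodule.span 𝕜 (y '' ↑s), ∀ r : 𝕜,
      (1 - ε) * ‖e‖ ≤ ‖e + r • y n‖ := by
  classical
  set E : Submodule 𝕜 X := Submodule.span 𝕜 (y '' ↑s) with hE
  haveI : FiniteDimensional 𝕜 E :=
    FiniteDimensional.span_of_finite 𝕜 ((s.finite_toSet).image y)
  set δ : ℝ := ε * c / (c + 2) with hδ
  have hδpos : 0 < δ := by positivity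
  have hδε : δ + 2 / c * δ = ε := by rw [hδ]; field_simp
  -- finite δ-net of the unit sphere of E
  obtain ⟨T, hTs, hTfin, hTcover⟩ :=
    (isCompact_sphere (0 : E) 1).finite_cover_balls hδpos
  -- norming functionals
  have hfun : ∀ p : E, p ∈ T → ∃ g : X →L[𝕜] 𝕜, ‖g‖ = 1 ∧ g (p : X) = (‖(p : X)‖ : 𝕜) := by
    intro p hp
    have hp1 : ‖p‖ = 1 := by simpa using (hTs hp)
    have hpne : (p : X) ≠ 0 := by
      intro h
      rw [show ‖p‖ = ‖(p : X)‖ from rfl, h, norm_zero] at hp1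
      norm_num at hp1
    exact exists_dual_vector 𝕜 (p : X) (norm_ne_zero_iff.mpr hpne)
  choose! g hg1 hg2 using hfun
  -- choose n
  have hev1 : ∀ᶠ n in atTop, ∀ p ∈ T, ‖g p (y n)‖ < δ := by
    rw [eventually_all_finite hTfin]
    intro p hp
    have := (hweak (g p))
    have h2 : ∀ᶠ n in atTop, g p (y n) ∈ Metric.ball (0 : 𝕜) δ :=
      this (Metric.ball_mem_nhds 0 hδpos)
    filter_upwards [h2] with n hn
    simpa [dist_eq_norm] using hn
  have hev2 : ∀ᶠ n in atTop, ∀ m ∈ s, m < n := by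
    filter_upwards [eventually_gt_atTop (s.sup id)] with n hn m hm
    exact lt_of_le_of_lt (Finset.le_sup (f := id) hm) hn
  obtain ⟨n, hn1, hn2⟩ := (hev1.and hev2).exists
  refine ⟨n, hn2, ?_⟩
  -- the key estimate on the unit sphere
  have key : ∀ u : E, ‖u‖ = 1 → ∀ r : 𝕜, 1 - ε ≤ ‖(u : X) + r • y n‖ := by
    intro u hu r
    by_cases hr : 2 ≤ ‖r‖ * c
    · have h1 : ‖r‖ * c ≤ ‖r‖ * ‖y n‖ :=
        mul_le_mul_of_nonneg_left (hinf n) (norm_nonneg _)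
      have h2 : ‖r • y n‖ = ‖r‖ * ‖y n‖ := norm_smul _ _
      have h3 : ‖r • y n‖ ≤ ‖(u : X) + r • y n‖ + ‖(u : X)‖ := by
        simpa using norm_sub_le ((u : X) + r • y n) (u : X)
      have h4 : ‖(u : X)‖ = 1 := hu
      linarith
    · push_neg at hr
      have hrle : ‖r‖ ≤ 2 / c := by
        rw [le_div_iff₀ hc]; linarith
      -- find a net point
      obtain ⟨p, hpT, hup⟩ : ∃ p ∈ T, u ∈ Metric.ball p δ := by
        have := hTcover (by simpa using hu : u ∈ Metric.sphere (0 : E) 1)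
        simpa using this
      have hdist : ‖(u : X) - (p : X)‖ < δ := by
        have : dist u p < δ := Metric.mem_ball.mp hup
        rw [dist_eq_norm] at this
        exact this
      have hp1 : ‖(p : X)‖ = 1 := by simpa using (hTs hpT)
      set f := g p with hf
      have hfnorm : ‖f‖ = 1 := hg1 p hpT
      have hfp : f (p : X) = (‖(p : X)‖ : 𝕜) := hg2 p hpT
      have hfp1 : ‖f (p : X)‖ = 1 := by rw [hfp, hp1]; simp
      have hsplit : f (p : X) = f ((u : X) + r • y n) - f ((u : X) - (p : X)) - r * f (y n) := by
        simp only [map_add, map_sub, map_smul, smul_eq_mul]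
        ring
      have b1 : ‖f ((u : X) + r • y n)‖ ≤ ‖(u : X) + r • y n‖ := by
        have := f.le_opNorm ((u : X) + r • y n)
        rwa [hfnorm, one_mul] at this
      have b2 : ‖f ((u : X) - (p : X))‖ ≤ ‖(u : X) - (p : X)‖ := by
        have := f.le_opNorm ((u : X) - (p : X))
        rwa [hfnorm, one_mul] at this
      have b3 : ‖f (y n)‖ < δ := hn1 p hpT
      have b4 : ‖r * f (y n)‖ ≤ 2 / c * δ := by
        rw [norm_mul]
        exact mul_le_mul hrle (le_of_lt b3) (norm_nonneg _) (by positivity)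
      have chain : (1 : ℝ) ≤ ‖(u : X) + r • y n‖ + δ + 2 / c * δ := by
        have := hsplit ▸ hfp1
        have h5 : ‖f ((u : X) + r • y n) - f ((u : X) - (p : X)) - r * f (y n)‖ ≤
            ‖f ((u : X) + r • y n)‖ + ‖f ((u : X) - (p : X))‖ + ‖r * f (y n)‖ := by
          calc ‖f ((u : X) + r • y n) - f ((u : X) - (p : X)) - r * f (y n)‖
              ≤ ‖f ((u : X) + r • y n) - f ((u : X) - (p : X))‖ + ‖r * f (y n)‖ :=
                norm_sub_le _ _
            _ ≤ ‖f ((u : X) + r • y n)‖ + ‖f ((u : X) - (p : X))‖ + ‖r * f (y n)‖ := by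
                have := norm_sub_le (f ((u : X) + r • y n)) (f ((u : X) - (p : X)))
                linarith
        linarith
      linarith
  -- reduce to the sphere
  intro e he r
  rcases eq_or_ne e 0 with rfl | hne
  · simp
  · have hnorm : (0 : ℝ) < ‖e‖ := norm_pos_iff.mpr hne
    set κ : 𝕜 := (‖e‖ : 𝕜) with hκ
    have hκnorm : ‖κ‖ = ‖e‖ := by simp [hκ, abs_of_pos hnorm]
    have hκne : κ ≠ 0 := by
      simp only [hκ, ne_eq, RCLike.ofReal_eq_zero]
      exact ne_of_gt hnorm
    have hmem : κ⁻¹ • e ∈ E := E.smul_mem _ he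
    set u : E := ⟨κ⁻¹ • e, hmem⟩ with hu
    have hunorm : ‖u‖ = 1 := by
      show ‖κ⁻¹ • e‖ = 1
      rw [norm_smul, norm_inv, hκnorm]
      field_simp
    have := key u hunorm (κ⁻¹ * r)
    have heq : (u : X) + (κ⁻¹ * r) • y n = κ⁻¹ • (e + r • y n) := by
      show κ⁻¹ • e + (κ⁻¹ * r) • y n = κ⁻¹ • (e + r • y n)
      rw [smul_add, mul_smul]
    rw [heq, norm_smul, norm_inv, hκnorm] at this
    calc (1 - ε) * ‖e‖ ≤ ‖e‖⁻¹ * ‖e + r • y n‖ * ‖e‖ := by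
          exact mul_le_mul_of_nonneg_right this (le_of_lt hnorm)
      _ = ‖e + r • y n‖ := by field_simp



noncomputable def phiAux (y : ℕ → X)
    (H : ∀ (s : Finset ℕ) (k : ℕ), ∃ n : ℕ, (∀ m ∈ s, m < n) ∧
      ∀ e ∈ Submodule.span 𝕜 (y '' ↑s), ∀ r : 𝕜,
        (1 - (2 : ℝ)⁻¹ ^ (k + 2)) * ‖e‖ ≤ ‖e + r • y n‖) (k : ℕ) : ℕ :=
  (H ((Finset.range k).attach.image fun i => phiAux y H i.1) k).choose
termination_by k
decreasing_by all_goals exact Finset.mem_range.mp i.2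

section phi
variable (y : ℕ → X)
  (H : ∀ (s : Finset ℕ) (k : ℕ), ∃ n : ℕ, (∀ m ∈ s, m < n) ∧
      ∀ e ∈ Submodule.span 𝕜 (y '' ↑s), ∀ r : 𝕜,
        (1 - (2 : ℝ)⁻¹ ^ (k + 2)) * ‖e‖ ≤ ‖e + r • y n‖)

lemma phiAux_image (k : ℕ) :
    ((Finset.range k).attach.image fun i => phiAux y H i.1) =
      (Finset.range k).image (phiAux y H) := by
  ext m
  simp

lemma phiAux_spec (k : ℕ) :
    (∀ m ∈ (Finset.range k).image (phiAux y H), m < phiAux y H k) ∧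
      ∀ e ∈ Submodule.span 𝕜 (y '' ↑((Finset.range k).image (phiAux y H))), ∀ r : 𝕜,
        (1 - (2 : ℝ)⁻¹ ^ (k + 2)) * ‖e‖ ≤ ‖e + r • y (phiAux y H k)‖ := by
  rw [← phiAux_image y H k]
  rw [phiAux]
  exact (H _ k).choose_spec

lemma phiAux_strictMono : StrictMono (phiAux y H) := by
  have h : ∀ j k, j < k → phiAux y H j < phiAux y H k := by
    intro j k hjk
    exact (phiAux_spec y H k).1 _ (Finset.mem_image_of_mem _ (Finset.mem_range.mpr hjk))
  exact strictMono_nat_of_lt_succ fun n => h n (n + 1) (Nat.lt_succ_self n)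

lemma phiAux_grunblum : Grunblum 𝕜 (y ∘ phiAux y H) 2 := by
  set φ := phiAux y H with hφ
  set x := y ∘ φ with hx
  intro a m n hmn
  set S := partialSum 𝕜 x a with hS
  set ε : ℕ → ℝ := fun k => (2 : ℝ)⁻¹ ^ (k + 2) with hε
  have hε_pos : ∀ k, 0 < ε k := fun k => by positivity
  have hε_le : ∀ k, ε k ≤ 1 / 4 := by
    intro k
    calc ε k = (2 : ℝ)⁻¹ ^ (k + 2) := rfl
      _ ≤ (2 : ℝ)⁻¹ ^ 2 := by
          apply pow_le_pow_of_le_one (by norm_num) (by norm_num)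
          omega
      _ = 1 / 4 := by norm_num
  have hfac_pos : ∀ k, (0 : ℝ) < 1 - ε k := fun k => by linarith [hε_le k]
  have hfac_le : ∀ k, (1 : ℝ) - ε k ≤ 1 := fun k => by linarith [hε_pos k]
  -- step inequality
  have step : ∀ k, (1 - ε k) * ‖S k‖ ≤ ‖S (k + 1)‖ := by
    intro k
    have hmem : S k ∈ Submodule.span 𝕜 (y '' ↑((Finset.range k).image φ)) := by
      rw [hS]
      unfold partialSum
      apply Submodule.sum_mem
      intro i hi
      apply Submodule.smul_mem
      apply Submodule.subset_span
      exact ⟨φ i, by simpa using ⟨i, Finset.mem_range.mp hi, rfl⟩, rfl⟩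
    have := (phiAux_spec y H k).2 (S k) hmem (a k)
    have hSsucc : S (k + 1) = S k + a k • y (φ k) := by
      rw [hS]
      unfold partialSum
      rw [Finset.sum_range_succ]
      rfl
    rw [hSsucc]
    exact this
  -- product lower bound
  have prod_lb : ∀ n, 1 / 2 + (2 : ℝ)⁻¹ ^ (n + 1) ≤ ∏ k ∈ Finset.range n, (1 - ε k) := by
    intro n
    induction n with
    | zero => norm_num
    | succ n ih =>
      rw [Finset.prod_range_succ]
      have ht : (0 : ℝ) < (2 : ℝ)⁻¹ ^ (n + 1) := by positivity
      have ht2 : (2 : ℝ)⁻¹ ^ (n + 1) ≤ 1 / 2 := by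
        calc (2 : ℝ)⁻¹ ^ (n + 1) ≤ (2 : ℝ)⁻¹ ^ 1 := by
              apply pow_le_pow_of_le_one (by norm_num) (by norm_num)
              omega
          _ = 1 / 2 := by norm_num
      have hεn : ε n = (2 : ℝ)⁻¹ ^ (n + 1) * (2 : ℝ)⁻¹ := by
        rw [hε]; ring
      have h2 : (2 : ℝ)⁻¹ ^ (n + 1 + 1) = (2 : ℝ)⁻¹ ^ (n + 1) * (2 : ℝ)⁻¹ := by ring
      have hprod_pos : (0 : ℝ) < ∏ k ∈ Finset.range n, (1 - ε k) :=
        Finset.prod_pos fun k _ => hfac_pos k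
      calc 1 / 2 + (2 : ℝ)⁻¹ ^ (n + 1 + 1)
          ≤ (1 / 2 + (2 : ℝ)⁻¹ ^ (n + 1)) * (1 - ε n) := by
            rw [hεn, h2]
            nlinarith [ht, ht2]
        _ ≤ (∏ k ∈ Finset.range n, (1 - ε k)) * (1 - ε n) :=
            mul_le_mul_of_nonneg_right ih (le_of_lt (hfac_pos n))
  have prod_range_lb : ∀ n, (1 : ℝ) / 2 ≤ ∏ k ∈ Finset.range n, (1 - ε k) := by
    intro n
    have := prod_lb n
    have : (0 : ℝ) < (2 : ℝ)⁻¹ ^ (n + 1) := by positivity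
    linarith [prod_lb n]
  -- chain inequality
  have chain : ∀ p q, p ≤ q → ‖S p‖ * ∏ k ∈ Finset.Ico p q, (1 - ε k) ≤ ‖S q‖ := by
    intro p q hpq
    induction q, hpq using Nat.le_induction with
    | base => simp
    | succ q hpq ih =>
      rw [Finset.prod_Ico_succ_top hpq, ← mul_assoc]
      calc ‖S p‖ * (∏ k ∈ Finset.Ico p q, (1 - ε k)) * (1 - ε q)
          ≤ ‖S q‖ * (1 - ε q) :=
            mul_le_mul_of_nonneg_right ih (le_of_lt (hfac_pos q))
        _ = (1 - ε q) * ‖S q‖ := by ring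
        _ ≤ ‖S (q + 1)‖ := step q
  -- Ico product ≥ 1/2
  have prod_Ico_lb : (1 : ℝ) / 2 ≤ ∏ k ∈ Finset.Ico m n, (1 - ε k) := by
    have hsplit : (∏ k ∈ Finset.range m, (1 - ε k)) * ∏ k ∈ Finset.Ico m n, (1 - ε k)
        = ∏ k ∈ Finset.range n, (1 - ε k) := Finset.prod_range_mul_prod_Ico _ hmn
    have h1 : (∏ k ∈ Finset.range m, (1 - ε k)) ≤ 1 :=
      Finset.prod_le_one (fun k _ => le_of_lt (hfac_pos k)) (fun k _ => hfac_le k)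
    have h2 : (0 : ℝ) < ∏ k ∈ Finset.Ico m n, (1 - ε k) :=
      Finset.prod_pos fun k _ => hfac_pos k
    have h3 := prod_range_lb n
    nlinarith [h1, h2, h3, hsplit]
  have := chain m n hmn
  have hnn : (0 : ℝ) ≤ ‖S m‖ := norm_nonneg _
  nlinarith [this, prod_Ico_lb, hnn]
end phi

lemma closure_expands {x : ℕ → X} {M c : ℝ} (hG : Grunblum 𝕜 x M) (hc : 0 < c)
    (hM : 0 < M) (hx : ∀ n, c ≤ ‖x n‖) {v : X}
    (hv : v ∈ closure (Submodule.span 𝕜 (Set.range x) : Set X)) :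
    ∃ a : ℕ → 𝕜, Expands 𝕜 x a v := by
  obtain ⟨u, hu_mem, hu_lim⟩ := mem_closure_iff_seq_limit.mp hv
  -- coefficients of each u j
  choose b N hb using fun j => span_expands x (hu_mem j)
  have hexp : ∀ j, Expands 𝕜 x (b j) (u j) := by
    intro j
    exact tendsto_atTop_of_eventually_const (hb j)
  -- difference expansions
  have hdiff : ∀ j j', Expands 𝕜 x (b j - b j') (u j - u j') :=
    fun j j' => expands_sub (hexp j) (hexp j')
  have hcauchy_u : CauchySeq u := hu_lim.cauchySeq
  -- each coefficient sequence is Cauchy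
  have hcoeff : ∀ (j j' : ℕ) (i : ℕ), ‖b j i - b j' i‖ ≤ 2 * M / c * ‖u j - u j'‖ := by
    intro j j' i
    have := hG.coeff_bound hc hx (hdiff j j') i
    simpa using this
  have key : ∀ i, CauchySeq (fun j => b j i) := by
    intro i
    rw [Metric.cauchySeq_iff]
    intro ε hε
    have hK : 0 < 2 * M / c := by positivity
    obtain ⟨J, hJ⟩ := Metric.cauchySeq_iff.mp hcauchy_u (ε / (2 * M / c)) (by positivity)
    refine ⟨J, fun j hj j' hj' => ?_⟩
    have h1 := hcoeff j j' i
    have h2 : ‖u j - u j'‖ < ε / (2 * M / c) := by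
      have := hJ j hj j' hj'
      rwa [dist_eq_norm] at this
    rw [dist_eq_norm]
    calc ‖b j i - b j' i‖ ≤ 2 * M / c * ‖u j - u j'‖ := h1
      _ < 2 * M / c * (ε / (2 * M / c)) := by
          exact mul_lt_mul_of_pos_left h2 hK
      _ = ε := by field_simp
  have hlim : ∀ i, ∃ l : 𝕜, Tendsto (fun j => b j i) atTop (nhds l) :=
    fun i => cauchySeq_tendsto_of_complete (key i)
  choose a ha using hlim
  refine ⟨a, ?_⟩
  -- partial sums of a are limits of partial sums of b j
  have hps : ∀ n, Tendsto (fun j => partialSum 𝕜 x (b j) n) atTop (nhds (partialSum 𝕜 x a n)) := by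
    intro n
    unfold partialSum
    exact tendsto_finset_sum _ (fun i _ => (ha i).smul_const (x i))
  rw [Expands, Metric.tendsto_atTop]
  intro ε hε
  -- choose J controlling everything
  obtain ⟨J, hJ⟩ := Metric.cauchySeq_iff.mp hcauchy_u (ε / 3 / M) (by positivity)
  obtain ⟨J', hJ'⟩ := Metric.tendsto_atTop.mp hu_lim (ε / 3) (by positivity)
  set j₀ := max J J' with hj₀
  have hj₀J : J ≤ j₀ := le_max_left _ _
  have hj₀J' : J' ≤ j₀ := le_max_right _ _
  refine ⟨N j₀, fun n hn => ?_⟩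
  -- ‖partialSum a n - partialSum (b j₀) n‖ ≤ ε/3
  have hstep1 : ‖partialSum 𝕜 x a n - partialSum 𝕜 x (b j₀) n‖ ≤ ε / 3 := by
    have htend : Tendsto (fun j => ‖partialSum 𝕜 x (b j) n - partialSum 𝕜 x (b j₀) n‖) atTop
        (nhds ‖partialSum 𝕜 x a n - partialSum 𝕜 x (b j₀) n‖) :=
      ((hps n).sub_const _).norm
    refine le_of_tendsto htend ?_
    filter_upwards [eventually_ge_atTop J] with j hj
    have : partialSum 𝕜 x (b j) n - partialSum 𝕜 x (b j₀) n = partialSum 𝕜 x (b j - b j₀) n := by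
      simp [partialSum, sub_smul, Finset.sum_sub_distrib]
    rw [this]
    have h1 := hG.norm_le (hdiff j j₀) n
    have h2 : ‖u j - u j₀‖ < ε / 3 / M := by
      have := hJ j hj j₀ hj₀J
      rwa [dist_eq_norm] at this
    calc ‖partialSum 𝕜 x (b j - b j₀) n‖ ≤ M * ‖u j - u j₀‖ := h1
      _ ≤ M * (ε / 3 / M) := le_of_lt (mul_lt_mul_of_pos_left h2 hM)
      _ = ε / 3 := by field_simp
  have hstep2 : partialSum 𝕜 x (b j₀) n = u j₀ := hb j₀ n hn
  have hstep3 : ‖u j₀ - v‖ < ε / 3 := by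
    have := hJ' j₀ hj₀J'
    rwa [dist_eq_norm] at this
  rw [dist_eq_norm]
  calc ‖partialSum 𝕜 x a n - v‖
      ≤ ‖partialSum 𝕜 x a n - partialSum 𝕜 x (b j₀) n‖ + ‖partialSum 𝕜 x (b j₀) n - v‖ := by
        have := norm_sub_le_norm_sub_add_norm_sub (partialSum 𝕜 x a n) (partialSum 𝕜 x (b j₀) n) v
        exact this
    _ ≤ ε / 3 + ‖u j₀ - v‖ := by rw [hstep2] at hstep1 ⊢; exact add_le_add_left hstep1 _
    _ < ε / 3 + ε / 3 := by linarith
    _ < ε := by linarith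


variable (𝕜)

/-- a sequence with `infₙ ‖yₙ‖ > 0` converging weakly to `0` contains a
subsequence which is an essential basic sequence. -/
theorem stmt14 (y : ℕ → X) (c : ℝ) (hc : 0 < c) (hinf : ∀ n, c ≤ ‖y n‖)
    (hweak : ∀ f : X →L[𝕜] 𝕜, Filter.Tendsto (fun n => f (y n)) Filter.atTop (nhds (0 : 𝕜))) :
    ∃ φ : ℕ → ℕ, StrictMono φ ∧ IsEssentialBasicSeq 𝕜 (y ∘ φ) := by
  have hq : ∀ k : ℕ, (0 : ℝ) < (2 : ℝ)⁻¹ ^ (k + 2) := fun k => by positivity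
  have hq1 : ∀ k : ℕ, (2 : ℝ)⁻¹ ^ (k + 2) < 1 := fun k =>
    pow_lt_one₀ (by norm_num) (by norm_num) (by omega)
  have H : ∀ (s : Finset ℕ) (k : ℕ), ∃ n : ℕ, (∀ m ∈ s, m < n) ∧
      ∀ e ∈ Submodule.span 𝕜 (y '' ↑s), ∀ r : 𝕜,
        (1 - (2 : ℝ)⁻¹ ^ (k + 2)) * ‖e‖ ≤ ‖e + r • y n‖ := fun s k =>
    mazur_step y c hc hinf hweak s _ (hq k) (hq1 k)
  have hG : Grunblum 𝕜 (y ∘ phiAux y H) 2 := phiAux_grunblum y H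
  have hx : ∀ n, c ≤ ‖(y ∘ phiAux y H) n‖ := fun n => hinf _
  refine ⟨phiAux y H, phiAux_strictMono y H, ?_⟩
  unfold IsEssentialBasicSeq
  constructor
  · intro v hv
    obtain ⟨a, ha⟩ := closure_expands hG hc (by norm_num) hx hv
    exact ⟨a, ha, fun b hb => hG.unique hc hx hb ha⟩
  · exact ⟨2, by norm_num, fun a v h n => hG.norm_le h n⟩
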